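/- For each SCI-formula φ, every branch of every TC_SCI-tableau with a labelled formula w : φ at the root has size polynomial in |φ|: there is a fixed polynomial p such that each such branch contains at most p(|φ|) labelled formulas and (in)equality expressions, where |φ| is the number of occurrences of subformulas of φ. -/

import Mathlib

/-- SCI-formulas: atoms, negation, implication, and the identity connective. -/
inductive SCIForm : Type
  | atom : ℕ → SCIForm
  | not : SCIForm → SCIForm
  | imp : SCIForm → SCIForm → SCIForm
  | idn : SCIForm → SCIForm → SCIForm
  deriving DecidableEq

/-- An SCI-structure over a carrier type `U`: a set of designated values and
operations interpreting ¬, →, ≡. -/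
structure SCIStruct (U : Type) where
  D : Set U
  neg : U → U
  imp : U → U → U
  idn : U → U → U

/-- `M` is an SCI-model: `U` is non-empty, `D` is a proper subset of `U`, and the
three semantic conditions hold. -/
def IsSCIModel {U : Type} (M : SCIStruct U) : Prop :=
  Nonempty U ∧ M.D ≠ Set.univ ∧
  (∀ a : U, M.neg a ∈ M.D ↔ a ∉ M.D) ∧
  (∀ a b : U, M.imp a b ∈ M.D ↔ (a ∉ M.D ∨ b ∈ M.D)) ∧
  (∀ a b : U, M.idn a b ∈ M.D ↔ a = b)

/-- A valuation in an SCI-structure: a homomorphism from formulas to `U`. -/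
def IsValuation {U : Type} (M : SCIStruct U) (V : SCIForm → U) : Prop :=
  (∀ φ, V (SCIForm.not φ) = M.neg (V φ)) ∧
  (∀ φ ψ, V (SCIForm.imp φ ψ) = M.imp (V φ) (V ψ)) ∧
  (∀ φ ψ, V (SCIForm.idn φ ψ) = M.idn (V φ) (V ψ))

/-- A formula is SCI-satisfiable if its denotation is designated in some
SCI-model under some valuation. -/
def SCISatisfiable (φ : SCIForm) : Prop :=
  ∃ (U : Type) (M : SCIStruct U) (V : SCIForm → U),
    IsSCIModel M ∧ IsValuation M V ∧ V φ ∈ M.D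

/-- A formula is SCI-valid if its denotation is designated in every SCI-model
under every valuation. -/
def SCIValid (φ : SCIForm) : Prop :=
  ∀ (U : Type) (M : SCIStruct U) (V : SCIForm → U),
    IsSCIModel M → IsValuation M V → V φ ∈ M.D

/-- Labels: a Boolean polarity (`true` = the set L⁺, `false` = the set L⁻)
together with a natural number index; L⁺ and L⁻ are disjoint and countably
infinite. -/
abbrev Label : Type := Bool × ℕ

/-- `w` belongs to L⁺. -/
def posL (w : Label) : Prop := w.1 = true

/-- `w` belongs to L⁻. -/
def negL (w : Label) : Prop := w.1 = false

/-- Expressions occurring on tableau branches: labelled formulas `w : φ`,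
equalities `w = v`, inequalities `w ≠ v`, and the closure symbol ⊥. -/
inductive Node : Type
  | lf : Label → SCIForm → Node
  | eq : Label → Label → Node
  | neq : Label → Label → Node
  | bot : Node
  deriving DecidableEq

/-- `|φ|`: the number of occurrences of subformulas of `φ`. -/
def SCIForm.size : SCIForm → ℕ
  | SCIForm.atom _ => 1
  | SCIForm.not φ => SCIForm.size φ + 1
  | SCIForm.imp φ ψ => SCIForm.size φ + SCIForm.size ψ + 1
  | SCIForm.idn φ ψ => SCIForm.size φ + SCIForm.size ψ + 1

/-- A label is fresh on a branch: no labelled formula on the branch carries it. -/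
def freshL (v : Label) (l : List Node) : Prop := ∀ φ, Node.lf v φ ∉ l

/-- One application of a TC_SCI rule extending a single branch.  A branch is a
list of nodes (in order of introduction, root first) together with the set `E`
of labelled formulas to which a decomposition rule has already been applied
(each decomposition rule may be applied only once to a given labelled formula,
each equality rule only if its conclusion is not yet on the branch, and no rule
is applied to a closed branch). -/
inductive Extend : List Node → Set (Label × SCIForm) → List Node → Set (Label × SCIForm) → Prop
  | negP (l : List Node) (E : Set (Label × SCIForm)) (w v : Label) (φ : SCIForm) :
      Node.bot ∉ l → posL w → Node.lf w (SCIForm.not φ) ∈ l → (w, SCIForm.not φ) ∉ E →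
      negL v → freshL v l →
      Extend l E (l ++ [Node.lf v φ]) (insert (w, SCIForm.not φ) E)
  | negN (l : List Node) (E : Set (Label × SCIForm)) (w v : Label) (φ : SCIForm) :
      Node.bot ∉ l → negL w → Node.lf w (SCIForm.not φ) ∈ l → (w, SCIForm.not φ) ∉ E →
      posL v → freshL v l →
      Extend l E (l ++ [Node.lf v φ]) (insert (w, SCIForm.not φ) E)
  | impP1 (l : List Node) (E : Set (Label × SCIForm)) (w v u : Label) (φ ψ : SCIForm) :
      Node.bot ∉ l → posL w → Node.lf w (SCIForm.imp φ ψ) ∈ l → (w, SCIForm.imp φ ψ) ∉ E →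
      negL v → negL u → v ≠ u → freshL v l → freshL u l →
      Extend l E (l ++ [Node.lf v φ, Node.lf u ψ]) (insert (w, SCIForm.imp φ ψ) E)
  | impP2 (l : List Node) (E : Set (Label × SCIForm)) (w v u : Label) (φ ψ : SCIForm) :
      Node.bot ∉ l → posL w → Node.lf w (SCIForm.imp φ ψ) ∈ l → (w, SCIForm.imp φ ψ) ∉ E →
      negL v → posL u → v ≠ u → freshL v l → freshL u l →
      Extend l E (l ++ [Node.lf v φ, Node.lf u ψ]) (insert (w, SCIForm.imp φ ψ) E)
  | impP3 (l : List Node) (E : Set (Label × SCIForm)) (w v u : Label) (φ ψ : SCIForm) :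
      Node.bot ∉ l → posL w → Node.lf w (SCIForm.imp φ ψ) ∈ l → (w, SCIForm.imp φ ψ) ∉ E →
      posL v → posL u → v ≠ u → freshL v l → freshL u l →
      Extend l E (l ++ [Node.lf v φ, Node.lf u ψ]) (insert (w, SCIForm.imp φ ψ) E)
  | impN (l : List Node) (E : Set (Label × SCIForm)) (w v u : Label) (φ ψ : SCIForm) :
      Node.bot ∉ l → negL w → Node.lf w (SCIForm.imp φ ψ) ∈ l → (w, SCIForm.imp φ ψ) ∉ E →
      posL v → negL u → v ≠ u → freshL v l → freshL u l →
      Extend l E (l ++ [Node.lf v φ, Node.lf u ψ]) (insert (w, SCIForm.imp φ ψ) E)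
  | idnP1 (l : List Node) (E : Set (Label × SCIForm)) (w v u : Label) (φ ψ : SCIForm) :
      Node.bot ∉ l → posL w → Node.lf w (SCIForm.idn φ ψ) ∈ l → (w, SCIForm.idn φ ψ) ∉ E →
      posL v → posL u → v ≠ u → freshL v l → freshL u l →
      Extend l E (l ++ [Node.lf v φ, Node.lf u ψ, Node.eq v u]) (insert (w, SCIForm.idn φ ψ) E)
  | idnP2 (l : List Node) (E : Set (Label × SCIForm)) (w v u : Label) (φ ψ : SCIForm) :
      Node.bot ∉ l → posL w → Node.lf w (SCIForm.idn φ ψ) ∈ l → (w, SCIForm.idn φ ψ) ∉ E →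
      negL v → negL u → v ≠ u → freshL v l → freshL u l →
      Extend l E (l ++ [Node.lf v φ, Node.lf u ψ, Node.eq v u]) (insert (w, SCIForm.idn φ ψ) E)
  | idnN1 (l : List Node) (E : Set (Label × SCIForm)) (w v u : Label) (φ ψ : SCIForm) :
      Node.bot ∉ l → negL w → Node.lf w (SCIForm.idn φ ψ) ∈ l → (w, SCIForm.idn φ ψ) ∉ E →
      posL v → posL u → v ≠ u → freshL v l → freshL u l →
      Extend l E (l ++ [Node.lf v φ, Node.lf u ψ, Node.neq v u]) (insert (w, SCIForm.idn φ ψ) E)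
  | idnN2 (l : List Node) (E : Set (Label × SCIForm)) (w v u : Label) (φ ψ : SCIForm) :
      Node.bot ∉ l → negL w → Node.lf w (SCIForm.idn φ ψ) ∈ l → (w, SCIForm.idn φ ψ) ∉ E →
      posL v → negL u → v ≠ u → freshL v l → freshL u l →
      Extend l E (l ++ [Node.lf v φ, Node.lf u ψ]) (insert (w, SCIForm.idn φ ψ) E)
  | idnN3 (l : List Node) (E : Set (Label × SCIForm)) (w v u : Label) (φ ψ : SCIForm) :
      Node.bot ∉ l → negL w → Node.lf w (SCIForm.idn φ ψ) ∈ l → (w, SCIForm.idn φ ψ) ∉ E →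
      negL v → posL u → v ≠ u → freshL v l → freshL u l →
      Extend l E (l ++ [Node.lf v φ, Node.lf u ψ]) (insert (w, SCIForm.idn φ ψ) E)
  | idnN4 (l : List Node) (E : Set (Label × SCIForm)) (w v u : Label) (φ ψ : SCIForm) :
      Node.bot ∉ l → negL w → Node.lf w (SCIForm.idn φ ψ) ∈ l → (w, SCIForm.idn φ ψ) ∉ E →
      negL v → negL u → v ≠ u → freshL v l → freshL u l →
      Extend l E (l ++ [Node.lf v φ, Node.lf u ψ, Node.neq v u]) (insert (w, SCIForm.idn φ ψ) E)
  | eqNeg (l : List Node) (E : Set (Label × SCIForm)) (w v u y : Label) (φ ψ : SCIForm) :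
      Node.bot ∉ l → Node.lf w φ ∈ l → Node.lf v ψ ∈ l → Node.eq w v ∈ l →
      Node.lf u (SCIForm.not φ) ∈ l → Node.lf y (SCIForm.not ψ) ∈ l →
      Node.eq u y ∉ l →
      Extend l E (l ++ [Node.eq u y]) E
  | eqImp (l : List Node) (E : Set (Label × SCIForm)) (w v w' v' x z : Label) (φ ψ χ θ : SCIForm) :
      Node.bot ∉ l → Node.lf w φ ∈ l → Node.lf v ψ ∈ l → Node.eq w v ∈ l →
      Node.lf w' χ ∈ l → Node.lf v' θ ∈ l → Node.eq w' v' ∈ l →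
      Node.lf x (SCIForm.imp φ χ) ∈ l → Node.lf z (SCIForm.imp ψ θ) ∈ l →
      Node.eq x z ∉ l →
      Extend l E (l ++ [Node.eq x z]) E
  | eqIdn (l : List Node) (E : Set (Label × SCIForm)) (w v w' v' x z : Label) (φ ψ χ θ : SCIForm) :
      Node.bot ∉ l → Node.lf w φ ∈ l → Node.lf v ψ ∈ l → Node.eq w v ∈ l →
      Node.lf w' χ ∈ l → Node.lf v' θ ∈ l → Node.eq w' v' ∈ l →
      Node.lf x (SCIForm.idn φ χ) ∈ l → Node.lf z (SCIForm.idn ψ θ) ∈ l →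
      Node.eq x z ∉ l →
      Extend l E (l ++ [Node.eq x z]) E
  | ruleF (l : List Node) (E : Set (Label × SCIForm)) (w v : Label) (φ : SCIForm) :
      Node.bot ∉ l → Node.lf w φ ∈ l → Node.lf v φ ∈ l → Node.eq w v ∉ l →
      Extend l E (l ++ [Node.eq w v]) E
  | ruleSym (l : List Node) (E : Set (Label × SCIForm)) (w v : Label) :
      Node.bot ∉ l → Node.eq w v ∈ l → Node.eq v w ∉ l →
      Extend l E (l ++ [Node.eq v w]) E
  | ruleTran (l : List Node) (E : Set (Label × SCIForm)) (w v u : Label) :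
      Node.bot ∉ l → Node.eq w v ∈ l → Node.eq v u ∈ l → Node.eq w u ∉ l →
      Extend l E (l ++ [Node.eq w u]) E
  | bot1 (l : List Node) (E : Set (Label × SCIForm)) (w v : Label) :
      Node.bot ∉ l → Node.eq w v ∈ l → Node.neq w v ∈ l →
      Extend l E (l ++ [Node.bot]) E
  | bot2 (l : List Node) (E : Set (Label × SCIForm)) (w v : Label) :
      Node.bot ∉ l → posL w → negL v → Node.eq w v ∈ l →
      Extend l E (l ++ [Node.bot]) E

/-- `ClosedTab l E` holds iff there is a closed TC_SCI-tableau all of whose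
branches extend the branch `l` (with `E` the set of labelled formulas already
decomposed on `l`): either a closure rule applies to `l`, or some rule of
TC_SCI can be applied so that all resulting branches carry closed tableaux. -/
inductive ClosedTab : List Node → Set (Label × SCIForm) → Prop
  | clos1 (l : List Node) (E : Set (Label × SCIForm)) (w v : Label) :
      Node.eq w v ∈ l → Node.neq w v ∈ l → ClosedTab l E
  | clos2 (l : List Node) (E : Set (Label × SCIForm)) (w v : Label) :
      posL w → negL v → Node.eq w v ∈ l → ClosedTab l E
  | negP (l : List Node) (E : Set (Label × SCIForm)) (w v : Label) (φ : SCIForm) :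
      posL w → Node.lf w (SCIForm.not φ) ∈ l → (w, SCIForm.not φ) ∉ E →
      negL v → freshL v l →
      ClosedTab (l ++ [Node.lf v φ]) (insert (w, SCIForm.not φ) E) →
      ClosedTab l E
  | negN (l : List Node) (E : Set (Label × SCIForm)) (w v : Label) (φ : SCIForm) :
      negL w → Node.lf w (SCIForm.not φ) ∈ l → (w, SCIForm.not φ) ∉ E →
      posL v → freshL v l →
      ClosedTab (l ++ [Node.lf v φ]) (insert (w, SCIForm.not φ) E) →
      ClosedTab l E
  | impP (l : List Node) (E : Set (Label × SCIForm)) (w : Label) (φ ψ : SCIForm)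
      (v1 u1 v2 u2 v3 u3 : Label) :
      posL w → Node.lf w (SCIForm.imp φ ψ) ∈ l → (w, SCIForm.imp φ ψ) ∉ E →
      negL v1 → negL u1 → v1 ≠ u1 → freshL v1 l → freshL u1 l →
      negL v2 → posL u2 → v2 ≠ u2 → freshL v2 l → freshL u2 l →
      posL v3 → posL u3 → v3 ≠ u3 → freshL v3 l → freshL u3 l →
      ClosedTab (l ++ [Node.lf v1 φ, Node.lf u1 ψ]) (insert (w, SCIForm.imp φ ψ) E) →
      ClosedTab (l ++ [Node.lf v2 φ, Node.lf u2 ψ]) (insert (w, SCIForm.imp φ ψ) E) →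
      ClosedTab (l ++ [Node.lf v3 φ, Node.lf u3 ψ]) (insert (w, SCIForm.imp φ ψ) E) →
      ClosedTab l E
  | impN (l : List Node) (E : Set (Label × SCIForm)) (w v u : Label) (φ ψ : SCIForm) :
      negL w → Node.lf w (SCIForm.imp φ ψ) ∈ l → (w, SCIForm.imp φ ψ) ∉ E →
      posL v → negL u → v ≠ u → freshL v l → freshL u l →
      ClosedTab (l ++ [Node.lf v φ, Node.lf u ψ]) (insert (w, SCIForm.imp φ ψ) E) →
      ClosedTab l E
  | idnP (l : List Node) (E : Set (Label × SCIForm)) (w : Label) (φ ψ : SCIForm)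
      (v1 u1 v2 u2 : Label) :
      posL w → Node.lf w (SCIForm.idn φ ψ) ∈ l → (w, SCIForm.idn φ ψ) ∉ E →
      posL v1 → posL u1 → v1 ≠ u1 → freshL v1 l → freshL u1 l →
      negL v2 → negL u2 → v2 ≠ u2 → freshL v2 l → freshL u2 l →
      ClosedTab (l ++ [Node.lf v1 φ, Node.lf u1 ψ, Node.eq v1 u1]) (insert (w, SCIForm.idn φ ψ) E) →
      ClosedTab (l ++ [Node.lf v2 φ, Node.lf u2 ψ, Node.eq v2 u2]) (insert (w, SCIForm.idn φ ψ) E) →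
      ClosedTab l E
  | idnN (l : List Node) (E : Set (Label × SCIForm)) (w : Label) (φ ψ : SCIForm)
      (v1 u1 v2 u2 v3 u3 v4 u4 : Label) :
      negL w → Node.lf w (SCIForm.idn φ ψ) ∈ l → (w, SCIForm.idn φ ψ) ∉ E →
      posL v1 → posL u1 → v1 ≠ u1 → freshL v1 l → freshL u1 l →
      posL v2 → negL u2 → v2 ≠ u2 → freshL v2 l → freshL u2 l →
      negL v3 → posL u3 → v3 ≠ u3 → freshL v3 l → freshL u3 l →
      negL v4 → negL u4 → v4 ≠ u4 → freshL v4 l → freshL u4 l →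
      ClosedTab (l ++ [Node.lf v1 φ, Node.lf u1 ψ, Node.neq v1 u1]) (insert (w, SCIForm.idn φ ψ) E) →
      ClosedTab (l ++ [Node.lf v2 φ, Node.lf u2 ψ]) (insert (w, SCIForm.idn φ ψ) E) →
      ClosedTab (l ++ [Node.lf v3 φ, Node.lf u3 ψ]) (insert (w, SCIForm.idn φ ψ) E) →
      ClosedTab (l ++ [Node.lf v4 φ, Node.lf u4 ψ, Node.neq v4 u4]) (insert (w, SCIForm.idn φ ψ) E) →
      ClosedTab l E
  | eqNeg (l : List Node) (E : Set (Label × SCIForm)) (w v u y : Label) (φ ψ : SCIForm) :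
      Node.lf w φ ∈ l → Node.lf v ψ ∈ l → Node.eq w v ∈ l →
      Node.lf u (SCIForm.not φ) ∈ l → Node.lf y (SCIForm.not ψ) ∈ l →
      Node.eq u y ∉ l →
      ClosedTab (l ++ [Node.eq u y]) E → ClosedTab l E
  | eqImp (l : List Node) (E : Set (Label × SCIForm)) (w v w' v' x z : Label) (φ ψ χ θ : SCIForm) :
      Node.lf w φ ∈ l → Node.lf v ψ ∈ l → Node.eq w v ∈ l →
      Node.lf w' χ ∈ l → Node.lf v' θ ∈ l → Node.eq w' v' ∈ l →
      Node.lf x (SCIForm.imp φ χ) ∈ l → Node.lf z (SCIForm.imp ψ θ) ∈ l →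
      Node.eq x z ∉ l →
      ClosedTab (l ++ [Node.eq x z]) E → ClosedTab l E
  | eqIdn (l : List Node) (E : Set (Label × SCIForm)) (w v w' v' x z : Label) (φ ψ χ θ : SCIForm) :
      Node.lf w φ ∈ l → Node.lf v ψ ∈ l → Node.eq w v ∈ l →
      Node.lf w' χ ∈ l → Node.lf v' θ ∈ l → Node.eq w' v' ∈ l →
      Node.lf x (SCIForm.idn φ χ) ∈ l → Node.lf z (SCIForm.idn ψ θ) ∈ l →
      Node.eq x z ∉ l →
      ClosedTab (l ++ [Node.eq x z]) E → ClosedTab l E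
  | ruleF (l : List Node) (E : Set (Label × SCIForm)) (w v : Label) (φ : SCIForm) :
      Node.lf w φ ∈ l → Node.lf v φ ∈ l → Node.eq w v ∉ l →
      ClosedTab (l ++ [Node.eq w v]) E → ClosedTab l E
  | ruleSym (l : List Node) (E : Set (Label × SCIForm)) (w v : Label) :
      Node.eq w v ∈ l → Node.eq v w ∉ l →
      ClosedTab (l ++ [Node.eq v w]) E → ClosedTab l E
  | ruleTran (l : List Node) (E : Set (Label × SCIForm)) (w v u : Label) :
      Node.eq w v ∈ l → Node.eq v u ∈ l → Node.eq w u ∉ l →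
      ClosedTab (l ++ [Node.eq w u]) E → ClosedTab l E

/-! ### Auxiliary development for stmt_15 -/

namespace Stmt15

def lfPairs (l : List Node) : List (Label × SCIForm) :=
  l.filterMap fun nd => match nd with | .lf w χ => some (w, χ) | _ => none

def eqPairs (l : List Node) : List (Label × Label) :=
  l.filterMap fun nd => match nd with | .eq w v => some (w, v) | _ => none

def neqPairs (l : List Node) : List (Label × Label) :=
  l.filterMap fun nd => match nd with | .neq w v => some (w, v) | _ => none

open Classical in
noncomputable def pot (E : Set (Label × SCIForm)) (l : List Node) : ℕ :=
  ((lfPairs l).map fun p => if p ∈ E then 0 else p.2.size).sum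

@[simp] lemma lfPairs_append (l₁ l₂ : List Node) :
    lfPairs (l₁ ++ l₂) = lfPairs l₁ ++ lfPairs l₂ := List.filterMap_append ..

@[simp] lemma eqPairs_append (l₁ l₂ : List Node) :
    eqPairs (l₁ ++ l₂) = eqPairs l₁ ++ eqPairs l₂ := List.filterMap_append ..

@[simp] lemma neqPairs_append (l₁ l₂ : List Node) :
    neqPairs (l₁ ++ l₂) = neqPairs l₁ ++ neqPairs l₂ := List.filterMap_append ..

lemma mem_lfPairs {l : List Node} {w : Label} {χ : SCIForm} :
    (w, χ) ∈ lfPairs l ↔ Node.lf w χ ∈ l := by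
  simp only [lfPairs, List.mem_filterMap]
  constructor
  · rintro ⟨a, ha, hfa⟩
    cases a <;> simp_all
  · intro hmem; exact ⟨_, hmem, rfl⟩

lemma mem_eqPairs {l : List Node} {w v : Label} :
    (w, v) ∈ eqPairs l ↔ Node.eq w v ∈ l := by
  simp only [eqPairs, List.mem_filterMap]
  constructor
  · rintro ⟨a, ha, hfa⟩
    cases a <;> simp_all
  · intro hmem; exact ⟨_, hmem, rfl⟩

lemma length_partition (l : List Node) :
    l.length = (lfPairs l).length + (eqPairs l).length + (neqPairs l).length
      + l.count Node.bot := by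
  induction l with
  | nil => simp [lfPairs, eqPairs, neqPairs]
  | cons x xs ih =>
    cases x <;>
      simp [lfPairs, eqPairs, neqPairs, List.count_cons, List.filterMap_cons] at ih ⊢ <;>
      omega

lemma nodup_lfPairs {l : List Node} (h : l.Nodup) : (lfPairs l).Nodup := by
  refine h.filterMap ?_
  rintro a a' b hb hb'
  cases a <;> cases a' <;> aesop

lemma nodup_eqPairs {l : List Node} (h : l.Nodup) : (eqPairs l).Nodup := by
  refine h.filterMap ?_
  rintro a a' b hb hb'
  cases a <;> cases a' <;> aesop

lemma sum_map_update {α : Type*} (f g : α → ℕ) (l : List α) (a : α) (hnd : l.Nodup)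
    (ha : a ∈ l) (hfg : ∀ b ∈ l, b ≠ a → g b = f b) (hga : g a = 0) :
    (l.map g).sum + f a = (l.map f).sum := by
  induction l with
  | nil => simp at ha
  | cons x xs ih =>
    rcases List.mem_cons.mp ha with rfl | h
    · have hnotin : a ∉ xs := (List.nodup_cons.mp hnd).1
      have : ∀ b ∈ xs, g b = f b := fun b hb =>
        hfg b (List.mem_cons_of_mem _ hb) (fun hba => hnotin (hba ▸ hb))
      have hmap : xs.map g = xs.map f := List.map_congr_left this
      simp [hga, hmap]
      omega
    · have := ih (List.nodup_cons.mp hnd).2 h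
        (fun b hb => hfg b (List.mem_cons_of_mem _ hb))
      have hx : g x = f x ∨ x = a := by
        by_cases hxa : x = a
        · exact Or.inr hxa
        · exact Or.inl (hfg x List.mem_cons_self hxa)
      rcases hx with hx | rfl
      · simp [hx]; omega
      · exact absurd h (List.nodup_cons.mp hnd).1

open Classical in
lemma pot_insert {l : List Node} {E : Set (Label × SCIForm)} {w : Label} {χ : SCIForm}
    (hnd : l.Nodup) (hmem : Node.lf w χ ∈ l) (hE : (w, χ) ∉ E) :
    pot (insert (w, χ) E) l + χ.size = pot E l := by
  have := sum_map_update
    (fun p : Label × SCIForm => if p ∈ E then 0 else p.2.size)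
    (fun p : Label × SCIForm => if p ∈ insert (w, χ) E then 0 else p.2.size)
    (lfPairs l) (w, χ) (nodup_lfPairs hnd) (mem_lfPairs.mpr hmem) ?_ ?_
  · simpa [pot, if_neg hE] using this
  · intro b _ hb
    by_cases hbE : b ∈ E
    · simp [hbE, Set.mem_insert_iff, hbE]
    · have : b ∉ insert (w, χ) E := by
        simp only [Set.mem_insert_iff]
        tauto
      simp [hbE, this]
  · simp [Set.mem_insert_iff]

open Classical in
lemma pot_append (E : Set (Label × SCIForm)) (l₁ l₂ : List Node) :
    pot E (l₁ ++ l₂) = pot E l₁ + pot E l₂ := by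
  simp [pot]

open Classical in
lemma pot_lf (E : Set (Label × SCIForm)) (v : Label) (ψ : SCIForm) (h : (v, ψ) ∉ E) :
    pot E [Node.lf v ψ] = ψ.size := by
  simp [pot, lfPairs, List.filterMap_cons, if_neg h]

open Classical in
lemma pot_eqnode (E : Set (Label × SCIForm)) (v u : Label) :
    pot E [Node.eq v u] = 0 := by simp [pot, lfPairs, List.filterMap_cons]

open Classical in
lemma pot_neqnode (E : Set (Label × SCIForm)) (v u : Label) :
    pot E [Node.neq v u] = 0 := by simp [pot, lfPairs, List.filterMap_cons]

open Classical in
lemma pot_botnode (E : Set (Label × SCIForm)) :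
    pot E [Node.bot] = 0 := by simp [pot, lfPairs, List.filterMap_cons]


@[simp] lemma lfPairs_nil : lfPairs [] = [] := rfl
@[simp] lemma lfPairs_cons_lf (w : Label) (χ : SCIForm) (l : List Node) :
    lfPairs (Node.lf w χ :: l) = (w, χ) :: lfPairs l := rfl
@[simp] lemma lfPairs_cons_eq (w v : Label) (l : List Node) :
    lfPairs (Node.eq w v :: l) = lfPairs l := rfl
@[simp] lemma lfPairs_cons_neq (w v : Label) (l : List Node) :
    lfPairs (Node.neq w v :: l) = lfPairs l := rfl
@[simp] lemma lfPairs_cons_bot (l : List Node) :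
    lfPairs (Node.bot :: l) = lfPairs l := rfl

@[simp] lemma eqPairs_nil : eqPairs [] = [] := rfl
@[simp] lemma eqPairs_cons_lf (w : Label) (χ : SCIForm) (l : List Node) :
    eqPairs (Node.lf w χ :: l) = eqPairs l := rfl
@[simp] lemma eqPairs_cons_eq (w v : Label) (l : List Node) :
    eqPairs (Node.eq w v :: l) = (w, v) :: eqPairs l := rfl
@[simp] lemma eqPairs_cons_neq (w v : Label) (l : List Node) :
    eqPairs (Node.neq w v :: l) = eqPairs l := rfl
@[simp] lemma eqPairs_cons_bot (l : List Node) :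
    eqPairs (Node.bot :: l) = eqPairs l := rfl

@[simp] lemma neqPairs_nil : neqPairs [] = [] := rfl
@[simp] lemma neqPairs_cons_lf (w : Label) (χ : SCIForm) (l : List Node) :
    neqPairs (Node.lf w χ :: l) = neqPairs l := rfl
@[simp] lemma neqPairs_cons_eq (w v : Label) (l : List Node) :
    neqPairs (Node.eq w v :: l) = neqPairs l := rfl
@[simp] lemma neqPairs_cons_neq (w v : Label) (l : List Node) :
    neqPairs (Node.neq w v :: l) = (w, v) :: neqPairs l := rfl
@[simp] lemma neqPairs_cons_bot (l : List Node) :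
    neqPairs (Node.bot :: l) = neqPairs l := rfl

open Classical in
@[simp] lemma pot_nil (E : Set (Label × SCIForm)) : pot E [] = 0 := rfl
open Classical in
lemma pot_cons_lf (E : Set (Label × SCIForm)) (w : Label) (χ : SCIForm) (l : List Node)
    (h : (w, χ) ∉ E) : pot E (Node.lf w χ :: l) = χ.size + pot E l := by
  simp [pot, if_neg h]
open Classical in
@[simp] lemma pot_cons_eq (E : Set (Label × SCIForm)) (w v : Label) (l : List Node) :
    pot E (Node.eq w v :: l) = pot E l := rfl
open Classical in
@[simp] lemma pot_cons_neq (E : Set (Label × SCIForm)) (w v : Label) (l : List Node) :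
    pot E (Node.neq w v :: l) = pot E l := rfl
open Classical in
@[simp] lemma pot_cons_bot (E : Set (Label × SCIForm)) (l : List Node) :
    pot E (Node.bot :: l) = pot E l := rfl

structure Inv (m : ℕ) (l : List Node) (E : Set (Label × SCIForm)) : Prop where
  nodup : l.Nodup
  eqLabs : ∀ w v, Node.eq w v ∈ l → (∃ χ, Node.lf w χ ∈ l) ∧ (∃ χ, Node.lf v χ ∈ l)
  neqLabs : ∀ w v, Node.neq w v ∈ l → (∃ χ, Node.lf w χ ∈ l) ∧ (∃ χ, Node.lf v χ ∈ l)
  elf : ∀ w χ, (w, χ) ∈ E → Node.lf w χ ∈ l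
  pots : (lfPairs l).length + 2 * pot E l ≤ 2 * m + 1
  neqs : (neqPairs l).length + pot E l ≤ m
  bots : l.count Node.bot ≤ 1

end Stmt15
namespace Stmt15

lemma fresh_ne {l : List Node} {v w : Label} {χ : SCIForm}
    (hv : freshL v l) (hw : Node.lf w χ ∈ l) : v ≠ w := by
  rintro rfl; exact hv χ hw

lemma fresh_not_E {m : ℕ} {l : List Node} {E : Set (Label × SCIForm)} {v : Label}
    (inv : Inv m l E) (hv : freshL v l) (ψ : SCIForm) : (v, ψ) ∉ E :=
  fun h => hv ψ (inv.elf _ _ h)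

/-- Decomposition appending one labelled formula. -/
lemma step_one {m : ℕ} {l : List Node} {E : Set (Label × SCIForm)}
    {w v : Label} {χ ψ : SCIForm}
    (inv : Inv m l E) (hw : Node.lf w χ ∈ l) (hE : (w, χ) ∉ E)
    (hv : freshL v l) (hsz : χ.size = ψ.size + 1) :
    Inv m (l ++ [Node.lf v ψ]) (insert (w, χ) E) := by
  have hpot : pot (insert (w, χ) E) l + χ.size = pot E l := pot_insert inv.nodup hw hE
  have hvE' : (v, ψ) ∉ insert (w, χ) E := by
    intro h
    rcases Set.mem_insert_iff.mp h with h | h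
    · exact fresh_ne hv hw (congrArg Prod.fst h)
    · exact fresh_not_E inv hv ψ h
  constructor
  · refine inv.nodup.append (List.nodup_singleton _) ?_
    intro a ha ha'
    simp only [List.mem_singleton] at ha'
    subst ha'
    exact hv ψ ha
  · intro a b hab
    rcases List.mem_append.mp hab with h | h
    · obtain ⟨⟨χ₁, h1⟩, ⟨χ₂, h2⟩⟩ := inv.eqLabs a b h
      exact ⟨⟨χ₁, List.mem_append_left _ h1⟩, ⟨χ₂, List.mem_append_left _ h2⟩⟩
    · simp at h
  · intro a b hab
    rcases List.mem_append.mp hab with h | h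
    · obtain ⟨⟨χ₁, h1⟩, ⟨χ₂, h2⟩⟩ := inv.neqLabs a b h
      exact ⟨⟨χ₁, List.mem_append_left _ h1⟩, ⟨χ₂, List.mem_append_left _ h2⟩⟩
    · simp at h
  · intro a b hab
    rcases Set.mem_insert_iff.mp hab with h | h
    · obtain ⟨rfl, rfl⟩ := Prod.mk.injEq .. ▸ h
      exact List.mem_append_left _ hw
    · exact List.mem_append_left _ (inv.elf a b h)
  · have := inv.pots
    rw [pot_append, pot_cons_lf _ _ _ _ hvE']
    simp only [lfPairs_append, List.length_append, lfPairs_cons_lf, lfPairs_nil,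
      List.length_cons, List.length_nil, pot_nil]
    omega
  · have := inv.neqs
    rw [pot_append, pot_cons_lf _ _ _ _ hvE']
    simp only [neqPairs_append, List.length_append, neqPairs_cons_lf, neqPairs_nil,
      List.length_nil, pot_nil]
    omega
  · have := inv.bots
    simp only [List.count_append]
    simpa using this

/-- Decomposition appending two labelled formulas and possibly an extra
(in)equality node among the two fresh labels. -/
lemma step_two {m : ℕ} {l : List Node} {E : Set (Label × SCIForm)}
    {w v u : Label} {χ φ ψ : SCIForm} (rest : List Node)
    (inv : Inv m l E) (hw : Node.lf w χ ∈ l) (hE : (w, χ) ∉ E)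
    (hv : freshL v l) (hu : freshL u l) (hvu : v ≠ u)
    (hsz : χ.size = φ.size + ψ.size + 1)
    (hrest : rest = [] ∨ rest = [Node.eq v u] ∨ rest = [Node.neq v u]) :
    Inv m (l ++ (Node.lf v φ :: Node.lf u ψ :: rest)) (insert (w, χ) E) := by
  have hpot : pot (insert (w, χ) E) l + χ.size = pot E l := pot_insert inv.nodup hw hE
  have hvE' : (v, φ) ∉ insert (w, χ) E := by
    intro h
    rcases Set.mem_insert_iff.mp h with h | h
    · exact fresh_ne hv hw (congrArg Prod.fst h)
    · exact fresh_not_E inv hv φ h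
  have huE' : (u, ψ) ∉ insert (w, χ) E := by
    intro h
    rcases Set.mem_insert_iff.mp h with h | h
    · exact fresh_ne hu hw (congrArg Prod.fst h)
    · exact fresh_not_E inv hu ψ h
  have hveq : ∀ b, Node.eq v b ∉ l := fun b hb => hv _ (inv.eqLabs v b hb).1.choose_spec
  have hvneq : ∀ b, Node.neq v b ∉ l := fun b hb => hv _ (inv.neqLabs v b hb).1.choose_spec
  constructor
  · refine inv.nodup.append ?_ ?_
    · rcases hrest with rfl | rfl | rfl <;> simp [hvu]
    · intro a ha ha'
      rcases hrest with rfl | rfl | rfl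
      · simp only [List.mem_cons, List.not_mem_nil, or_false] at ha'
        rcases ha' with rfl | rfl
        · exact hv _ ha
        · exact hu _ ha
      · simp only [List.mem_cons, List.not_mem_nil, or_false] at ha'
        rcases ha' with rfl | rfl | rfl
        · exact hv _ ha
        · exact hu _ ha
        · exact hveq _ ha
      · simp only [List.mem_cons, List.not_mem_nil, or_false] at ha'
        rcases ha' with rfl | rfl | rfl
        · exact hv _ ha
        · exact hu _ ha
        · exact hvneq _ ha
  · intro a b hab
    rcases List.mem_append.mp hab with h | h
    · obtain ⟨⟨χ₁, h1⟩, ⟨χ₂, h2⟩⟩ := inv.eqLabs a b h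
      exact ⟨⟨χ₁, List.mem_append_left _ h1⟩, ⟨χ₂, List.mem_append_left _ h2⟩⟩
    · rcases hrest with rfl | rfl | rfl
      · simp at h
      · simp only [List.mem_cons, List.not_mem_nil, or_false, Node.eq.injEq,
          reduceCtorEq, false_or, or_false] at h
        obtain ⟨rfl, rfl⟩ := h
        exact ⟨⟨φ, by simp⟩, ⟨ψ, by simp⟩⟩
      · simp at h
  · intro a b hab
    rcases List.mem_append.mp hab with h | h
    · obtain ⟨⟨χ₁, h1⟩, ⟨χ₂, h2⟩⟩ := inv.neqLabs a b h
      exact ⟨⟨χ₁, List.mem_append_left _ h1⟩, ⟨χ₂, List.mem_append_left _ h2⟩⟩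
    · rcases hrest with rfl | rfl | rfl
      · simp at h
      · simp at h
      · simp only [List.mem_cons, List.not_mem_nil, or_false, Node.neq.injEq,
          reduceCtorEq, false_or, or_false] at h
        obtain ⟨rfl, rfl⟩ := h
        exact ⟨⟨φ, by simp⟩, ⟨ψ, by simp⟩⟩
  · intro a b hab
    rcases Set.mem_insert_iff.mp hab with h | h
    · obtain ⟨rfl, rfl⟩ := Prod.mk.injEq .. ▸ h
      exact List.mem_append_left _ hw
    · exact List.mem_append_left _ (inv.elf a b h)
  · have := inv.pots
    have hrest0 : lfPairs rest = [] ∧ pot (insert (w, χ) E) rest = 0 := by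
      rcases hrest with rfl | rfl | rfl <;> simp
    rw [pot_append, pot_cons_lf _ _ _ _ hvE', pot_cons_lf _ _ _ _ huE', hrest0.2]
    simp only [lfPairs_append, List.length_append, lfPairs_cons_lf, hrest0.1,
      List.length_cons, List.length_nil]
    omega
  · have := inv.neqs
    have hrest0 : (neqPairs rest).length ≤ 1 ∧ pot (insert (w, χ) E) rest = 0 := by
      rcases hrest with rfl | rfl | rfl <;> simp
    rw [pot_append, pot_cons_lf _ _ _ _ hvE', pot_cons_lf _ _ _ _ huE', hrest0.2]
    simp only [neqPairs_append, List.length_append, neqPairs_cons_lf]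
    omega
  · have := inv.bots
    have hrest0 : (Node.lf v φ :: Node.lf u ψ :: rest).count Node.bot = 0 := by
      rcases hrest with rfl | rfl | rfl <;> simp
    simp only [List.count_append, hrest0]
    omega

/-- An equality rule appending a single equality node. -/
lemma step_eq {m : ℕ} {l : List Node} {E : Set (Label × SCIForm)} {x z : Label}
    (inv : Inv m l E) (hnew : Node.eq x z ∉ l)
    (hx : ∃ χ, Node.lf x χ ∈ l) (hz : ∃ χ, Node.lf z χ ∈ l) :
    Inv m (l ++ [Node.eq x z]) E := by
  constructor
  · refine inv.nodup.append (List.nodup_singleton _) ?_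
    intro a ha ha'
    simp only [List.mem_singleton] at ha'
    subst ha'
    exact hnew ha
  · intro a b hab
    rcases List.mem_append.mp hab with h | h
    · obtain ⟨⟨χ₁, h1⟩, ⟨χ₂, h2⟩⟩ := inv.eqLabs a b h
      exact ⟨⟨χ₁, List.mem_append_left _ h1⟩, ⟨χ₂, List.mem_append_left _ h2⟩⟩
    · simp only [List.mem_singleton, Node.eq.injEq] at h
      obtain ⟨rfl, rfl⟩ := h
      exact ⟨⟨hx.choose, List.mem_append_left _ hx.choose_spec⟩,
             ⟨hz.choose, List.mem_append_left _ hz.choose_spec⟩⟩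
  · intro a b hab
    rcases List.mem_append.mp hab with h | h
    · obtain ⟨⟨χ₁, h1⟩, ⟨χ₂, h2⟩⟩ := inv.neqLabs a b h
      exact ⟨⟨χ₁, List.mem_append_left _ h1⟩, ⟨χ₂, List.mem_append_left _ h2⟩⟩
    · simp at h
  · intro a b hab
    exact List.mem_append_left _ (inv.elf a b hab)
  · have := inv.pots
    rw [pot_append]
    simpa using this
  · have := inv.neqs
    rw [pot_append]
    simpa using this
  · have := inv.bots
    simp only [List.count_append]
    simpa using this

/-- A closure rule appending ⊥. -/
lemma step_bot {m : ℕ} {l : List Node} {E : Set (Label × SCIForm)}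
    (inv : Inv m l E) (hb : Node.bot ∉ l) :
    Inv m (l ++ [Node.bot]) E := by
  constructor
  · refine inv.nodup.append (List.nodup_singleton _) ?_
    intro a ha ha'
    simp only [List.mem_singleton] at ha'
    subst ha'
    exact hb ha
  · intro a b hab
    rcases List.mem_append.mp hab with h | h
    · obtain ⟨⟨χ₁, h1⟩, ⟨χ₂, h2⟩⟩ := inv.eqLabs a b h
      exact ⟨⟨χ₁, List.mem_append_left _ h1⟩, ⟨χ₂, List.mem_append_left _ h2⟩⟩
    · simp at h
  · intro a b hab
    rcases List.mem_append.mp hab with h | h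
    · obtain ⟨⟨χ₁, h1⟩, ⟨χ₂, h2⟩⟩ := inv.neqLabs a b h
      exact ⟨⟨χ₁, List.mem_append_left _ h1⟩, ⟨χ₂, List.mem_append_left _ h2⟩⟩
    · simp at h
  · intro a b hab
    exact List.mem_append_left _ (inv.elf a b hab)
  · have := inv.pots
    rw [pot_append]
    simpa using this
  · have := inv.neqs
    rw [pot_append]
    simpa using this
  · have h0 : l.count Node.bot = 0 := List.count_eq_zero.mpr hb
    simp [List.count_append, h0]

end Stmt15
namespace Stmt15

lemma extend_inv {m : ℕ} {l : List Node} {E : Set (Label × SCIForm)}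
    {l' : List Node} {E' : Set (Label × SCIForm)}
    (hx : Extend l E l' E') (inv : Inv m l E) : Inv m l' E' := by
  cases hx with
  | negP w v φ hb hp hm hE hn hf =>
      exact step_one inv hm hE hf rfl
  | negN w v φ hb hp hm hE hn hf =>
      exact step_one inv hm hE hf rfl
  | impP1 w v u φ ψ hb hp hm hE h1 h2 hvu hfv hfu =>
      exact step_two [] inv hm hE hfv hfu hvu rfl (Or.inl rfl)
  | impP2 w v u φ ψ hb hp hm hE h1 h2 hvu hfv hfu =>
      exact step_two [] inv hm hE hfv hfu hvu rfl (Or.inl rfl)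
  | impP3 w v u φ ψ hb hp hm hE h1 h2 hvu hfv hfu =>
      exact step_two [] inv hm hE hfv hfu hvu rfl (Or.inl rfl)
  | impN w v u φ ψ hb hp hm hE h1 h2 hvu hfv hfu =>
      exact step_two [] inv hm hE hfv hfu hvu rfl (Or.inl rfl)
  | idnP1 w v u φ ψ hb hp hm hE h1 h2 hvu hfv hfu =>
      exact step_two [Node.eq v u] inv hm hE hfv hfu hvu rfl (Or.inr (Or.inl rfl))
  | idnP2 w v u φ ψ hb hp hm hE h1 h2 hvu hfv hfu =>
      exact step_two [Node.eq v u] inv hm hE hfv hfu hvu rfl (Or.inr (Or.inl rfl))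
  | idnN1 w v u φ ψ hb hp hm hE h1 h2 hvu hfv hfu =>
      exact step_two [Node.neq v u] inv hm hE hfv hfu hvu rfl (Or.inr (Or.inr rfl))
  | idnN2 w v u φ ψ hb hp hm hE h1 h2 hvu hfv hfu =>
      exact step_two [] inv hm hE hfv hfu hvu rfl (Or.inl rfl)
  | idnN3 w v u φ ψ hb hp hm hE h1 h2 hvu hfv hfu =>
      exact step_two [] inv hm hE hfv hfu hvu rfl (Or.inl rfl)
  | idnN4 w v u φ ψ hb hp hm hE h1 h2 hvu hfv hfu =>
      exact step_two [Node.neq v u] inv hm hE hfv hfu hvu rfl (Or.inr (Or.inr rfl))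
  | eqNeg w v u y φ ψ hb h1 h2 h3 h4 h5 h6 =>
      exact step_eq inv h6 ⟨_, h4⟩ ⟨_, h5⟩
  | eqImp w v w' v' x z φ ψ χ θ hb h1 h2 h3 h4 h5 h6 h7 h8 h9 =>
      exact step_eq inv h9 ⟨_, h7⟩ ⟨_, h8⟩
  | eqIdn w v w' v' x z φ ψ χ θ hb h1 h2 h3 h4 h5 h6 h7 h8 h9 =>
      exact step_eq inv h9 ⟨_, h7⟩ ⟨_, h8⟩
  | ruleF w v φ hb h1 h2 h3 =>
      exact step_eq inv h3 ⟨_, h1⟩ ⟨_, h2⟩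
  | ruleSym w v hb h1 h2 =>
      exact step_eq inv h2 (inv.eqLabs w v h1).2 (inv.eqLabs w v h1).1
  | ruleTran w v u hb h1 h2 h3 =>
      exact step_eq inv h3 (inv.eqLabs w v h1).1 (inv.eqLabs v u h2).2
  | bot1 w v hb h1 h2 =>
      exact step_bot inv hb
  | bot2 w v hb h1 h2 h3 =>
      exact step_bot inv hb

lemma inv_init (w : Label) (φ : SCIForm) : Inv φ.size [Node.lf w φ] ∅ := by
  constructor
  · simp
  · intro a b hab; simp at hab
  · intro a b hab; simp at hab
  · intro a b hab; simp at hab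
  · rw [show [Node.lf w φ] = Node.lf w φ :: [] from rfl,
      pot_cons_lf _ _ _ _ (Set.notMem_empty _)]
    simp
    omega
  · rw [show [Node.lf w φ] = Node.lf w φ :: [] from rfl,
      pot_cons_lf _ _ _ _ (Set.notMem_empty _)]
    simp
  · simp

lemma inv_length {m : ℕ} {l : List Node} {E : Set (Label × SCIForm)}
    (inv : Inv m l E) : l.length ≤ 4 * m ^ 2 + 7 * m + 3 := by
  classical
  have hlf : (lfPairs l).length ≤ 2 * m + 1 := by have := inv.pots; omega
  have hneq : (neqPairs l).length ≤ m := by have := inv.neqs; omega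
  have hbot := inv.bots
  have heq : (eqPairs l).length ≤ (2 * m + 1) * (2 * m + 1) := by
    set s : Finset Label := ((lfPairs l).map Prod.fst).toFinset with hs
    have hscard : s.card ≤ 2 * m + 1 :=
      le_trans (List.toFinset_card_le _) (by simpa using hlf)
    have hnd : (eqPairs l).Nodup := nodup_eqPairs inv.nodup
    have hsub : (eqPairs l).toFinset ⊆ s ×ˢ s := by
      intro p hp
      simp only [List.mem_toFinset] at hp
      obtain ⟨a, b⟩ := p
      have hab := mem_eqPairs.mp hp
      obtain ⟨⟨χ₁, h1⟩, ⟨χ₂, h2⟩⟩ := inv.eqLabs a b hab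
      refine Finset.mem_product.mpr ⟨?_, ?_⟩ <;>
        simp only [hs, List.mem_toFinset, List.mem_map]
      · exact ⟨(a, χ₁), mem_lfPairs.mpr h1, rfl⟩
      · exact ⟨(b, χ₂), mem_lfPairs.mpr h2, rfl⟩
    calc (eqPairs l).length = (eqPairs l).toFinset.card :=
          (List.toFinset_card_of_nodup hnd).symm
      _ ≤ (s ×ˢ s).card := Finset.card_le_card hsub
      _ = s.card * s.card := Finset.card_product s s
      _ ≤ (2 * m + 1) * (2 * m + 1) := Nat.mul_le_mul hscard hscard
  have hpart := length_partition l
  have hsq : (2 * m + 1) * (2 * m + 1) = 4 * m ^ 2 + 4 * m + 1 := by ring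
  omega

end Stmt15

/-- every branch of every TC_SCI-tableau with w : φ at the root
(formalized as a finite sequence of branch states, each obtained from the
previous one by a single rule application) has size polynomial in |φ|: there is
a fixed polynomial p such that each such branch contains at most p(|φ|)
labelled formulas and (in)equality expressions. -/
theorem stmt_15 :
    ∃ p : Polynomial ℕ,
      ∀ (φ : SCIForm) (w : Label) (n : ℕ)
        (g : ℕ → List Node) (h : ℕ → Set (Label × SCIForm)),
        g 0 = [Node.lf w φ] → h 0 = ∅ →
        (∀ i < n, Extend (g i) (h i) (g (i + 1)) (h (i + 1))) →
        (g n).length ≤ p.eval (SCIForm.size φ) := by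
  refine ⟨Polynomial.C 4 * Polynomial.X ^ 2 + Polynomial.C 7 * Polynomial.X +
    Polynomial.C 3, ?_⟩
  intro φ w n g h hg0 hh0 hstep
  have key : ∀ i, i ≤ n → Stmt15.Inv φ.size (g i) (h i) := by
    intro i
    induction i with
    | zero =>
        intro _
        rw [hg0, hh0]
        exact Stmt15.inv_init w φ
    | succ j ih =>
        intro hj
        exact Stmt15.extend_inv (hstep j (by omega)) (ih (by omega))
  have hlen := Stmt15.inv_length (key n le_rfl)
  have heval : (Polynomial.C 4 * Polynomial.X ^ 2 + Polynomial.C 7 * Polynomial.X +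
      Polynomial.C 3 : Polynomial ℕ).eval φ.size = 4 * φ.size ^ 2 + 7 * φ.size + 3 := by
    simp
  rw [heval]
  exact hlen
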